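/- Let 𝒜 ⊆ ℬ ⊆ F be nested sub-σ-algebras and let T : Ω → Δ(𝒴) be an 𝒜-measurable random variable. Then E[ℓ(T,Y)] = E[d_ℓ(T, Q_𝒜)] + E[d_ℓ(Q_𝒜, Q_ℬ)] + E[E_ℓ(Q_ℬ)]. -/

import Mathlib

open MeasureTheory Finset

noncomputable section

/-- The probability simplex on a finite label set `𝒴`, identified with the set of
functions `p : 𝒴 → ℝ` with nonnegative coordinates summing to one. -/
def simplex (𝒴 : Type*) [Fintype 𝒴] : Set (𝒴 → ℝ) :=
  {p | (∀ y, 0 ≤ p y) ∧ ∑ y, p y = 1}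

/-- Conditional risk `L(p,q) := ∑_y q(y) ℓ(p,y)`. -/
def condRisk {𝒴 : Type*} [Fintype 𝒴] (ℓ : (𝒴 → ℝ) → 𝒴 → ℝ) (p q : 𝒴 → ℝ) : ℝ :=
  ∑ y, q y * ℓ p y

/-- Generalized entropy `E_ℓ(q) := L(q,q)`. -/
def gEntropy {𝒴 : Type*} [Fintype 𝒴] (ℓ : (𝒴 → ℝ) → 𝒴 → ℝ) (q : 𝒴 → ℝ) : ℝ :=
  condRisk ℓ q q

/-- Divergence (regret) `d_ℓ(p,q) := L(p,q) - E_ℓ(q)`. -/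
def divg {𝒴 : Type*} [Fintype 𝒴] (ℓ : (𝒴 → ℝ) → 𝒴 → ℝ) (p q : 𝒴 → ℝ) : ℝ :=
  condRisk ℓ p q - gEntropy ℓ q

section Aux

variable {Ω 𝒴 : Type*} [Fintype 𝒴]

lemma condRisk_abs_le {ℓ : (𝒴 → ℝ) → 𝒴 → ℝ} {M : ℝ}
    (hM : ∀ p ∈ simplex 𝒴, ∀ y, |ℓ p y| ≤ M) {p q : 𝒴 → ℝ}
    (hp : p ∈ simplex 𝒴) (hq : q ∈ simplex 𝒴) : |condRisk ℓ p q| ≤ M := by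
  calc |∑ y, q y * ℓ p y| ≤ ∑ y, |q y * ℓ p y| := Finset.abs_sum_le_sum_abs _ _
    _ = ∑ y, q y * |ℓ p y| := by
        refine Finset.sum_congr rfl fun y _ => ?_
        rw [abs_mul, abs_of_nonneg (hq.1 y)]
    _ ≤ ∑ y, q y * M := Finset.sum_le_sum fun y _ =>
        mul_le_mul_of_nonneg_left (hM p hp y) (hq.1 y)
    _ = M := by rw [← Finset.sum_mul, hq.2, one_mul]

lemma condRisk_integrable {mΩ : MeasurableSpace Ω} {P : Measure Ω} [IsProbabilityMeasure P]
    {ℓ : (𝒴 → ℝ) → 𝒴 → ℝ} (hℓmeas : ∀ y, Measurable fun p : 𝒴 → ℝ => ℓ p y)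
    {M : ℝ} (hM : ∀ p ∈ simplex 𝒴, ∀ y, |ℓ p y| ≤ M)
    {f g : Ω → 𝒴 → ℝ} (hfΔ : ∀ ω, f ω ∈ simplex 𝒴) (hgΔ : ∀ ω, g ω ∈ simplex 𝒴)
    (hf : ∀ y, Measurable[mΩ] fun ω => f ω y) (hg : ∀ y, Measurable[mΩ] fun ω => g ω y) :
    Integrable (fun ω => condRisk ℓ (f ω) (g ω)) P := by
  have hmeas : Measurable[mΩ] fun ω => condRisk ℓ (f ω) (g ω) := by
    unfold condRisk
    exact Finset.measurable_sum _ fun y _ =>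
      (hg y).mul ((hℓmeas y).comp (measurable_pi_lambda _ hf))
  refine (integrable_const M).mono' hmeas.aestronglyMeasurable ?_
  exact Filter.Eventually.of_forall fun ω => by
    simpa [Real.norm_eq_abs] using condRisk_abs_le hM (hfΔ ω) (hgΔ ω)

/-- Key lemma: the expected loss of an `m`-measurable simplex-valued predictor `f`
equals the expectation of its conditional risk against (a version of) the conditional
law given `m`. -/
lemma integral_loss_eq_integral_condRisk
    [MeasurableSpace 𝒴] [MeasurableSingletonClass 𝒴]
    {mΩ : MeasurableSpace Ω} {P : Measure Ω} [IsProbabilityMeasure P]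
    {Y : Ω → 𝒴} (hY : Measurable[mΩ] Y)
    {ℓ : (𝒴 → ℝ) → 𝒴 → ℝ} (hℓmeas : ∀ y, Measurable fun p : 𝒴 → ℝ => ℓ p y)
    {M : ℝ} (hM : ∀ p ∈ simplex 𝒴, ∀ y, |ℓ p y| ≤ M) (hM0 : 0 ≤ M)
    {m : MeasurableSpace Ω} (hm : m ≤ mΩ)
    {f : Ω → 𝒴 → ℝ} (hfΔ : ∀ ω, f ω ∈ simplex 𝒴)
    (hf : ∀ y, Measurable[m] fun ω => f ω y)
    {Q : Ω → 𝒴 → ℝ}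
    (hQver : ∀ y, (fun ω => Q ω y)
      =ᵐ[P] P[Set.indicator {ω | Y ω = y} (fun _ => (1 : ℝ)) | m]) :
    ∫ ω, ℓ (f ω) (Y ω) ∂P = ∫ ω, condRisk ℓ (f ω) (Q ω) ∂P := by
  classical
  set g : 𝒴 → Ω → ℝ := fun y ω => ℓ (f ω) y with hgdef
  have hgm : ∀ y, Measurable[m] (g y) := fun y =>
    (hℓmeas y).comp (measurable_pi_lambda _ hf)
  have hgm' : ∀ y, Measurable[mΩ] (g y) := fun y => (hgm y).mono hm le_rfl
  have hgbdd : ∀ y ω, |g y ω| ≤ M := fun y ω => hM _ (hfΔ ω) y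
  set ind : 𝒴 → Ω → ℝ := fun y => Set.indicator {ω | Y ω = y} (fun _ => (1 : ℝ))
    with hinddef
  have hsmeas : ∀ y : 𝒴, MeasurableSet[mΩ] {ω | Y ω = y} := fun y =>
    hY (measurableSet_singleton y)
  have hindle : ∀ y ω, |ind y ω| ≤ 1 := by
    intro y ω
    by_cases h : ω ∈ {ω' | Y ω' = y} <;> simp [hinddef, Set.indicator_apply, h]
  have hind_int : ∀ y, Integrable (ind y) P := fun y =>
    (integrable_const (1 : ℝ)).indicator (hsmeas y)
  have hmul_int : ∀ y, Integrable (g y * ind y) P := by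
    intro y
    refine (integrable_const M).mono'
      ((hgm' y).mul (measurable_const.indicator (hsmeas y))).aestronglyMeasurable ?_
    refine Filter.Eventually.of_forall fun ω => ?_
    have : ‖(g y * ind y) ω‖ = |g y ω| * |ind y ω| := by
      simp [Real.norm_eq_abs, abs_mul]
    rw [this]
    calc |g y ω| * |ind y ω| ≤ M * 1 :=
          mul_le_mul (hgbdd y ω) (hindle y ω) (abs_nonneg _) hM0
      _ = M := mul_one M
  have key : ∀ y, ∫ ω, (g y * ind y) ω ∂P = ∫ ω, Q ω y * g y ω ∂P := by
    intro y
    have h1 : P[g y * ind y|m] =ᵐ[P] g y * P[ind y|m] :=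
      condExp_mul_of_stronglyMeasurable_left (hgm y).stronglyMeasurable (hmul_int y) (hind_int y)
    calc ∫ ω, (g y * ind y) ω ∂P
        = ∫ ω, (P[g y * ind y|m]) ω ∂P := (integral_condExp hm).symm
      _ = ∫ ω, (g y * P[ind y|m]) ω ∂P := integral_congr_ae h1
      _ = ∫ ω, Q ω y * g y ω ∂P := by
          refine integral_congr_ae ?_
          filter_upwards [hQver y] with ω hω
          simp only [Pi.mul_apply, hω, mul_comm]
          rfl
  have hQint : ∀ y, Integrable (fun ω => Q ω y * g y ω) P := by
    intro y
    have hmul : Integrable (g y * P[ind y|m]) P :=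
      integrable_condExp.bdd_mul (c := M) (hgm' y).aestronglyMeasurable
        (Filter.Eventually.of_forall fun ω => by simpa [Real.norm_eq_abs] using hgbdd y ω)
    refine hmul.congr ?_
    filter_upwards [hQver y] with ω hω
    simp only [Pi.mul_apply, hω, mul_comm]
    rfl
  have hpt : (fun ω => ℓ (f ω) (Y ω)) = fun ω => ∑ y, (g y * ind y) ω := by
    funext ω
    have h1 : ∀ y, (g y * ind y) ω = if Y ω = y then ℓ (f ω) y else 0 := by
      intro y
      simp [hinddef, hgdef, Set.indicator_apply, Set.mem_setOf_eq, mul_ite]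
    rw [Finset.sum_congr rfl fun y _ => h1 y]
    simp
  calc ∫ ω, ℓ (f ω) (Y ω) ∂P
      = ∫ ω, ∑ y, (g y * ind y) ω ∂P := by rw [hpt]
    _ = ∑ y, ∫ ω, (g y * ind y) ω ∂P := integral_finset_sum _ fun y _ => hmul_int y
    _ = ∑ y, ∫ ω, Q ω y * g y ω ∂P := Finset.sum_congr rfl fun y _ => key y
    _ = ∫ ω, ∑ y, Q ω y * g y ω ∂P := (integral_finset_sum _ fun y _ => hQint y).symm
    _ = ∫ ω, condRisk ℓ (f ω) (Q ω) ∂P := by simp [condRisk, hgdef]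

end Aux

theorem chain_decomposition
    {Ω 𝒴 : Type*} [Fintype 𝒴] [Nonempty 𝒴]
    [MeasurableSpace 𝒴] [MeasurableSingletonClass 𝒴]
    {mΩ : MeasurableSpace Ω} {P : Measure Ω} [IsProbabilityMeasure P]
    (Y : Ω → 𝒴) (hY : Measurable Y)
    (ℓ : (𝒴 → ℝ) → 𝒴 → ℝ)
    (hℓmeas : ∀ y, Measurable fun p : 𝒴 → ℝ => ℓ p y)
    (hℓbdd : ∃ M : ℝ, ∀ p ∈ simplex 𝒴, ∀ y, |ℓ p y| ≤ M)
    {𝒜 ℬ : MeasurableSpace Ω} (h𝒜ℬ : 𝒜 ≤ ℬ) (hℬ : ℬ ≤ mΩ)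
    (T : Ω → 𝒴 → ℝ) (hTΔ : ∀ ω, T ω ∈ simplex 𝒴)
    (hTmeas : ∀ y, Measurable[𝒜] fun ω => T ω y)
    (Q𝒜 : Ω → 𝒴 → ℝ) (hQ𝒜Δ : ∀ ω, Q𝒜 ω ∈ simplex 𝒴)
    (hQ𝒜meas : ∀ y, Measurable[𝒜] fun ω => Q𝒜 ω y)
    (hQ𝒜ver : ∀ y, (fun ω => Q𝒜 ω y)
      =ᵐ[P] P[Set.indicator {ω | Y ω = y} (fun _ => (1 : ℝ)) | 𝒜])
    (Qℬ : Ω → 𝒴 → ℝ) (hQℬΔ : ∀ ω, Qℬ ω ∈ simplex 𝒴)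
    (hQℬmeas : ∀ y, Measurable[ℬ] fun ω => Qℬ ω y)
    (hQℬver : ∀ y, (fun ω => Qℬ ω y)
      =ᵐ[P] P[Set.indicator {ω | Y ω = y} (fun _ => (1 : ℝ)) | ℬ]) :
    ∫ ω, ℓ (T ω) (Y ω) ∂P
      = ∫ ω, divg ℓ (T ω) (Q𝒜 ω) ∂P + ∫ ω, divg ℓ (Q𝒜 ω) (Qℬ ω) ∂P
        + ∫ ω, gEntropy ℓ (Qℬ ω) ∂P := by
  obtain ⟨M₀, hM₀⟩ := hℓbdd
  set M : ℝ := max M₀ 0 with hMdef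
  have hM : ∀ p ∈ simplex 𝒴, ∀ y, |ℓ p y| ≤ M := fun p hp y =>
    (hM₀ p hp y).trans (le_max_left _ _)
  have hM0 : (0 : ℝ) ≤ M := le_max_right _ _
  have h𝒜 : 𝒜 ≤ mΩ := h𝒜ℬ.trans hℬ
  have hT' : ∀ y, Measurable[mΩ] fun ω => T ω y := fun y => (hTmeas y).mono h𝒜 le_rfl
  have hQ𝒜' : ∀ y, Measurable[mΩ] fun ω => Q𝒜 ω y := fun y => (hQ𝒜meas y).mono h𝒜 le_rfl
  have hQ𝒜ℬ : ∀ y, Measurable[ℬ] fun ω => Q𝒜 ω y := fun y => (hQ𝒜meas y).mono h𝒜ℬ le_rfl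
  have hQℬ' : ∀ y, Measurable[mΩ] fun ω => Qℬ ω y := fun y => (hQℬmeas y).mono hℬ le_rfl
  have hA : ∫ ω, ℓ (T ω) (Y ω) ∂P = ∫ ω, condRisk ℓ (T ω) (Q𝒜 ω) ∂P :=
    integral_loss_eq_integral_condRisk hY hℓmeas hM hM0 h𝒜 hTΔ hTmeas hQ𝒜ver
  have hB : ∫ ω, ℓ (Q𝒜 ω) (Y ω) ∂P = ∫ ω, condRisk ℓ (Q𝒜 ω) (Q𝒜 ω) ∂P :=
    integral_loss_eq_integral_condRisk hY hℓmeas hM hM0 h𝒜 hQ𝒜Δ hQ𝒜meas hQ𝒜ver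
  have hC : ∫ ω, ℓ (Q𝒜 ω) (Y ω) ∂P = ∫ ω, condRisk ℓ (Q𝒜 ω) (Qℬ ω) ∂P :=
    integral_loss_eq_integral_condRisk hY hℓmeas hM hM0 hℬ hQ𝒜Δ hQ𝒜ℬ hQℬver
  have hBC : ∫ ω, condRisk ℓ (Q𝒜 ω) (Q𝒜 ω) ∂P = ∫ ω, condRisk ℓ (Q𝒜 ω) (Qℬ ω) ∂P :=
    hB.symm.trans hC
  have iTA : Integrable (fun ω => condRisk ℓ (T ω) (Q𝒜 ω)) P :=
    condRisk_integrable hℓmeas hM hTΔ hQ𝒜Δ hT' hQ𝒜'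
  have iAA : Integrable (fun ω => condRisk ℓ (Q𝒜 ω) (Q𝒜 ω)) P :=
    condRisk_integrable hℓmeas hM hQ𝒜Δ hQ𝒜Δ hQ𝒜' hQ𝒜'
  have iAB : Integrable (fun ω => condRisk ℓ (Q𝒜 ω) (Qℬ ω)) P :=
    condRisk_integrable hℓmeas hM hQ𝒜Δ hQℬΔ hQ𝒜' hQℬ'
  have iBB : Integrable (fun ω => condRisk ℓ (Qℬ ω) (Qℬ ω)) P :=
    condRisk_integrable hℓmeas hM hQℬΔ hQℬΔ hQℬ' hQℬ'
  have e1 : ∫ ω, divg ℓ (T ω) (Q𝒜 ω) ∂P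
      = ∫ ω, condRisk ℓ (T ω) (Q𝒜 ω) ∂P - ∫ ω, condRisk ℓ (Q𝒜 ω) (Q𝒜 ω) ∂P := by
    simpa [divg, gEntropy] using integral_sub iTA iAA
  have e2 : ∫ ω, divg ℓ (Q𝒜 ω) (Qℬ ω) ∂P
      = ∫ ω, condRisk ℓ (Q𝒜 ω) (Qℬ ω) ∂P - ∫ ω, condRisk ℓ (Qℬ ω) (Qℬ ω) ∂P := by
    simpa [divg, gEntropy] using integral_sub iAB iBB
  have e3 : ∫ ω, gEntropy ℓ (Qℬ ω) ∂P = ∫ ω, condRisk ℓ (Qℬ ω) (Qℬ ω) ∂P := rfl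
  rw [hA, e1, e2, e3, hBC]
  ring

end
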